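/- Let (M,g,∇) be an n-dimensional statistical manifold (n ≥ 4) with dual connection ∇*, and let W and W* be the conformal-projective curvature tensors of (M,g,∇) and (M,g,∇*) respectively. Then g(W(X,Y)Z,U) + g(W*(X,Y)U,Z) = 0 for all vector fields X,Y,Z,U. -/

import Mathlib

open Matrix in
lemma mccoy_aux {C : Type*} [CommRing C] {ι : Type*} [Fintype ι] [DecidableEq ι]
    (M : Matrix ι ι C) (hM : ∀ v, M.mulVec v = 0 → v = 0) (c : C)
    (hc : c * M.det = 0) : c = 0 := by
  classical
  set n := Fintype.card ι with hn
  -- Q m : c kills all m×m minors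
  set Q : ℕ → Prop := fun m => ∀ (r s : Fin m → ι),
      Function.Injective r → Function.Injective s →
        c * (M.submatrix r s).det = 0 with hQ
  have hQn : Q n := by
    intro r s hr hs
    have hrb : Function.Bijective r :=
      (Fintype.bijective_iff_injective_and_card r).2 ⟨hr, by simp [hn]⟩
    have hsb : Function.Bijective s :=
      (Fintype.bijective_iff_injective_and_card s).2 ⟨hs, by simp [hn]⟩
    let e₁ : Fin n ≃ ι := Equiv.ofBijective r hrb
    let e₂ : Fin n ≃ ι := Equiv.ofBijective s hsb
    let σ : Equiv.Perm (Fin n) := e₂.trans e₁.symm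
    have hsub : M.submatrix r s = (M.submatrix e₁ e₁).submatrix id σ := by
      ext i j
      simp [e₁, σ, Equiv.ofBijective_apply, Matrix.submatrix_apply,
        Equiv.apply_symm_apply]
      exact (congrArg (M (r i)) (Equiv.ofBijective_apply_symm_apply r hrb (e₂ j))).symm
    rw [hsub, Matrix.det_permute', Matrix.det_submatrix_equiv_self]
    rcases Int.units_eq_one_or (Equiv.Perm.sign σ) with h | h <;>
      simp [h, hc, mul_comm, mul_left_comm]
  have hstep : ∀ m, m < n → Q (m + 1) → Q m := by
    intro m hm hQm1 r s hr hs
    -- find a column index not in the range of s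
    have hex : ∃ j : ι, j ∉ Finset.image s Finset.univ := by
      by_contra h
      push_neg at h
      have h2 : (Finset.image s Finset.univ) = Finset.univ :=
        Finset.eq_univ_iff_forall.mpr h
      have := congrArg Finset.card h2
      rw [Finset.card_image_of_injective _ hs, Finset.card_univ,
        Finset.card_univ, Fintype.card_fin] at this
      omega
    obtain ⟨j, hj⟩ := hex
    have hjr : j ∉ Set.range s := by
      simpa [Set.range, Finset.mem_image] using hj
    set s' : Fin (m + 1) → ι := Fin.cons j s with hs'
    have hs'inj : Function.Injective s' := Fin.cons_injective_of_injective hjr hs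
    -- the candidate kernel vector
    set v : ι → C := fun x => ∑ a : Fin (m + 1),
        if s' a = x then (-1 : C) ^ (a : ℕ) * c *
          (M.submatrix r (s' ∘ a.succAbove)).det else 0 with hv
    have hMv : M.mulVec v = 0 := by
      funext i
      have hrow : (M.mulVec v) i = ∑ a : Fin (m + 1),
          (-1 : C) ^ (a : ℕ) * M i (s' a) * (c *
            (M.submatrix r (s' ∘ a.succAbove)).det) := by
        simp only [Matrix.mulVec, dotProduct, hv, Finset.mul_sum]
        rw [Finset.sum_comm]
        refine Finset.sum_congr rfl fun a _ => ?_
        rw [Finset.sum_eq_single (s' a)]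
        · simp; ring
        · intro x _ hx
          simp [Ne.symm hx]
        · simp
      rw [hrow]
      have hlap : ∑ a : Fin (m + 1),
          (-1 : C) ^ (a : ℕ) * M i (s' a) *
            (M.submatrix r (s' ∘ a.succAbove)).det
          = (M.submatrix (Fin.cons i r) s').det := by
        rw [Matrix.det_succ_row_zero]
        refine (Finset.sum_congr rfl fun a _ => ?_).symm
        have e1 : (M.submatrix (Fin.cons i r) s') 0 a = M i (s' a) := by
          simp [Matrix.submatrix_apply]
        have e2 : (M.submatrix (Fin.cons i r) s').submatrix Fin.succ a.succAbove
            = M.submatrix r (s' ∘ a.succAbove) := by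
          ext p q
          simp [Matrix.submatrix_apply, Fin.cons_succ]
        rw [e1, e2]
      have : ∑ a : Fin (m + 1),
          (-1 : C) ^ (a : ℕ) * M i (s' a) * (c *
            (M.submatrix r (s' ∘ a.succAbove)).det)
          = c * (M.submatrix (Fin.cons i r) s').det := by
        rw [← hlap, Finset.mul_sum]
        refine Finset.sum_congr rfl fun a _ => ?_
        ring
      rw [this]
      by_cases hi : ∃ t, r t = i
      · obtain ⟨t, ht⟩ := hi
        have : (M.submatrix (Fin.cons i r) s').det = 0 := by
          apply Matrix.det_zero_of_row_eq (i := 0) (j := t.succ)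
            (Fin.succ_ne_zero t).symm
          funext a
          simp [Matrix.submatrix_apply, Fin.cons_zero, Fin.cons_succ, ht]
        simp [this]
      · push_neg at hi
        have hir : i ∉ Set.range r := by
          simpa [Set.range] using hi
        have hri : Function.Injective (Fin.cons i r : Fin (m+1) → ι) :=
          Fin.cons_injective_of_injective hir hr
        simpa using hQm1 (Fin.cons i r) s' hri hs'inj
    have hv0 : v = 0 := hM v hMv
    have := congrFun hv0 j
    rw [hv] at this
    simp only [Pi.zero_apply] at this
    rw [Finset.sum_eq_single (0 : Fin (m+1))] at this
    · have h0 : s' (0 : Fin (m+1)) = j := by simp [hs']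
      rw [if_pos h0] at this
      have hrs : (s' ∘ Fin.succAbove (0 : Fin (m+1))) = s := by
        funext q
        simp [hs', Fin.succAbove_zero, Fin.cons_succ]
      rw [hrs] at this
      simpa using this
    · intro a _ ha
      have : s' a ≠ j := by
        intro h
        have h0 : s' (0 : Fin (m+1)) = j := by simp [hs']
        exact ha (hs'inj (h.trans h0.symm))
      simp [this]
    · simp
  -- downward induction
  have hdown : ∀ i, i ≤ n → Q (n - i) := by
    intro i
    induction i with
    | zero => intro _; simpa using hQn
    | succ i ih =>
      intro h
      have h1 : n - (i + 1) < n := by omega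
      have h2 : n - (i + 1) + 1 = n - i := by omega
      have := hstep (n - (i + 1)) h1 (by rw [h2]; exact ih (by omega))
      exact this
  have hQ0 : Q 0 := by simpa using hdown n le_rfl
  have := hQ0 (Fin.elim0) (Fin.elim0) (fun a => a.elim0) (fun a => a.elim0)
  simpa [Matrix.det_fin_zero] using this



namespace SM

variable (C : Type*) (V : Type*) [CommRing C] [AddCommGroup V] [Module C V]

/-- Abstract differential-geometric setting: `C` plays the role of the ring
`C^∞(M)` of smooth functions on a manifold `M`, `V` the `C`-module `Γ(TM)` of
smooth vector fields, `D X f` the directional derivative `X f`, and `bracket`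
the Lie bracket of vector fields. -/
structure Geo where
  D : V → C → C
  D_add_left : ∀ (X Y : V) (f : C), D (X + Y) f = D X f + D Y f
  D_smul_left : ∀ (f : C) (X : V) (h : C), D (f • X) h = f * D X h
  D_add_right : ∀ (X : V) (f h : C), D X (f + h) = D X f + D X h
  D_mul : ∀ (X : V) (f h : C), D X (f * h) = f * D X h + h * D X f
  bracket : V → V → V
  bracket_D : ∀ (X Y : V) (f : C), D (bracket X Y) f = D X (D Y f) - D Y (D X f)

variable {C V}

/-- `g` is a Riemannian metric: a symmetric nondegenerate `C`-bilinear form. -/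
structure IsMetric (g : V → V → C) : Prop where
  symm : ∀ X Y, g X Y = g Y X
  add_left : ∀ X Y Z, g (X + Y) Z = g X Z + g Y Z
  smul_left : ∀ (f : C) (X Y : V), g (f • X) Y = f * g X Y
  nondeg : ∀ X, (∀ Y, g X Y = 0) → X = 0

/-- `cd` is an affine connection. -/
structure IsConn (A : Geo C V) (cd : V → V → V) : Prop where
  add_left : ∀ X Y Z, cd (X + Y) Z = cd X Z + cd Y Z
  smul_left : ∀ (f : C) (X Y : V), cd (f • X) Y = f • cd X Y
  add_right : ∀ X Y Z, cd X (Y + Z) = cd X Y + cd X Z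
  leibniz : ∀ (X : V) (f : C) (Y : V), cd X (f • Y) = A.D X f • Y + f • cd X Y

/-- `(g, cd)` is a statistical structure: `cd` is a torsion-free affine
connection and `∇ g` is totally symmetric (Codazzi equation). -/
structure IsStatConn (A : Geo C V) (g : V → V → C) (cd : V → V → V)
    extends IsConn A cd : Prop where
  torsion_free : ∀ X Y, cd X Y - cd Y X = A.bracket X Y
  codazzi : ∀ X Y Z,
    A.D X (g Y Z) - g (cd X Y) Z - g Y (cd X Z)
      = A.D Y (g X Z) - g (cd Y X) Z - g X (cd Y Z)

/-- `cds` is the connection dual to `cd` with respect to `g`: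
`X g(Y,Z) = g(∇_X Y, Z) + g(Y, ∇*_X Z)`. -/
def IsDual (A : Geo C V) (g : V → V → C) (cd cds : V → V → V) : Prop :=
  ∀ X Y Z, A.D X (g Y Z) = g (cd X Y) Z + g Y (cds X Z)

/-- Curvature tensor `R(X,Y)Z = ∇_X ∇_Y Z - ∇_Y ∇_X Z - ∇_[X,Y] Z`. -/
def curv (A : Geo C V) (cd : V → V → V) (X Y Z : V) : V :=
  cd X (cd Y Z) - cd Y (cd X Z) - cd (A.bracket X Y) Z

end SM

namespace SM

variable {C V : Type*} [CommRing C] [Algebra ℝ C] [AddCommGroup V] [Module C V]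

/-- Conformal–projective curvature tensor (formula (1.1)), built from the
curvature `curv A cd`, the Ricci tensors `Ric, Rics` of `∇` and `∇*`, the Ricci
operators `RicS, RicSs`, the scalar curvature `σ'`, and `n = dim M`. -/
noncomputable def cpW (A : Geo C V) (g : V → V → C) (cd : V → V → V)
    (Ric Rics : V → V → C) (RicS RicSs : V →ₗ[C] V) (σ' : C) (n : ℕ)
    (X Y Z : V) : V :=
  curv A cd X Y Z
    + (algebraMap ℝ C (1 / ((n : ℝ) * ((n : ℝ) - 2)))
        * (((n : C) - 1) * Ric X Z + Rics X Z)) • Y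
    - (algebraMap ℝ C (1 / ((n : ℝ) * ((n : ℝ) - 2)))
        * (((n : C) - 1) * Ric Y Z + Rics Y Z)) • X
    + (algebraMap ℝ C (1 / ((n : ℝ) * ((n : ℝ) - 2))) * g X Z)
        • (((n : C) - 1) • RicSs Y + RicS Y)
    - (algebraMap ℝ C (1 / ((n : ℝ) * ((n : ℝ) - 2))) * g Y Z)
        • (((n : C) - 1) • RicSs X + RicS X)
    + (algebraMap ℝ C (1 / (((n : ℝ) - 1) * ((n : ℝ) - 2))) * σ' * g Y Z) • X
    - (algebraMap ℝ C (1 / (((n : ℝ) - 1) * ((n : ℝ) - 2))) * σ' * g X Z) • Y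

/-- The tensor `L(X,Y) = (1/(n-2)) { (1/n)[(n-1)Ric(X,Y) + Ric*(X,Y)]
- (σ/(2(n-1))) g(X,Y) }`. -/
noncomputable def cpL (g : V → V → C) (Ric Rics : V → V → C) (σ' : C) (n : ℕ)
    (X Y : V) : C :=
  algebraMap ℝ C (1 / ((n : ℝ) - 2)) *
    (algebraMap ℝ C (1 / (n : ℝ)) * (((n : C) - 1) * Ric X Y + Rics X Y)
      - algebraMap ℝ C (1 / (2 * ((n : ℝ) - 1))) * σ' * g X Y)

/-- The Weyl conformal curvature tensor of a Riemannian manifold. -/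
noncomputable def weyl (A : Geo C V) (g : V → V → C) (cd : V → V → V)
    (Ric : V → V → C) (RicS : V →ₗ[C] V) (σ' : C) (n : ℕ)
    (X Y Z : V) : V :=
  curv A cd X Y Z
    + (algebraMap ℝ C (1 / ((n : ℝ) - 2)) * Ric X Z) • Y
    - (algebraMap ℝ C (1 / ((n : ℝ) - 2)) * Ric Y Z) • X
    + (algebraMap ℝ C (1 / ((n : ℝ) - 2)) * g X Z) • RicS Y
    - (algebraMap ℝ C (1 / ((n : ℝ) - 2)) * g Y Z) • RicS X
    - (algebraMap ℝ C (1 / (((n : ℝ) - 1) * ((n : ℝ) - 2))) * σ' * g X Z) • Y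
    + (algebraMap ℝ C (1 / (((n : ℝ) - 1) * ((n : ℝ) - 2))) * σ' * g Y Z) • X

end SM

/-- Theorem 2.1: for the conformal-projective curvature tensors `W` of
`(M,g,∇)` and `W*` of the dual statistical manifold `(M,g,∇*)`,
`g(W(X,Y)Z, U) + g(W*(X,Y)U, Z) = 0`. -/
theorem stmt3 {C V : Type*} [CommRing C] [Algebra ℝ C] [AddCommGroup V]
    [Module C V] [Module.Free C V] [Module.Finite C V]
    (A : SM.Geo C V) (g : V → V → C) (cd cds : V → V → V)
    (hn : 4 ≤ Module.finrank C V)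
    (hg : SM.IsMetric g) (hstat : SM.IsStatConn A g cd)
    (hconn : SM.IsConn A cds) (hdual : SM.IsDual A g cd cds)
    (T Ts : V → V → V →ₗ[C] V)
    (hT : ∀ Y Z X, T Y Z X = SM.curv A cd X Y Z)
    (hTs : ∀ Y Z X, Ts Y Z X = SM.curv A cds X Y Z)
    (Ric Rics : V → V → C)
    (hRic : ∀ Y Z, Ric Y Z = LinearMap.trace C V (T Y Z))
    (hRics : ∀ Y Z, Rics Y Z = LinearMap.trace C V (Ts Y Z))
    (RicS RicSs : V →ₗ[C] V)
    (hRicS : ∀ X Y, g (RicS X) Y = Ric X Y)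
    (hRicSs : ∀ X Y, g (RicSs X) Y = Rics X Y)
    (σ' σ's : C)
    (hσ : σ' = LinearMap.trace C V RicS)
    (hσs : σ's = LinearMap.trace C V RicSs)
    :
    ∀ X Y Z U : V,
      g (SM.cpW A g cd Ric Rics RicS RicSs σ' (Module.finrank C V) X Y Z) U
      + g (SM.cpW A g cds Rics Ric RicSs RicS σ's (Module.finrank C V) X Y U) Z
      = 0 := by
  classical
  open Matrix in
  -- ### basic bilinearity lemmas for `g`
  have gzero_l : ∀ Y : V, g 0 Y = 0 := by
    intro Y
    have h := hg.smul_left 0 0 Y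
    rwa [zero_smul, zero_mul] at h
  have gneg_l : ∀ X Y : V, g (-X) Y = -g X Y := by
    intro X Y
    have h := hg.smul_left (-1) X Y
    rwa [neg_one_smul, neg_one_mul] at h
  have gsub_l : ∀ X Y Z : V, g (X - Y) Z = g X Z - g Y Z := by
    intro X Y Z
    rw [sub_eq_add_neg, hg.add_left, gneg_l, sub_eq_add_neg]
  have gadd_r : ∀ X Y Z : V, g X (Y + Z) = g X Y + g X Z := by
    intro X Y Z
    rw [hg.symm, hg.add_left, hg.symm Y, hg.symm Z]
  have gsub_r : ∀ X Y Z : V, g X (Y - Z) = g X Y - g X Z := by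
    intro X Y Z
    rw [hg.symm, gsub_l, hg.symm Y, hg.symm Z]
  -- ### duality of the curvature tensors
  have hcurv0 : ∀ X Y Z U : V,
      g (SM.curv A cd X Y Z) U + g Z (SM.curv A cds X Y U) = 0 := by
    intro X Y Z U
    have h7 := hdual (A.bracket X Y) Z U
    have h8 := A.bracket_D X Y (g Z U)
    have h9 : A.D X (A.D Y (g Z U))
        = g (cd X (cd Y Z)) U + g (cd Y Z) (cds X U)
          + (g (cd X Z) (cds Y U) + g Z (cds X (cds Y U))) := by
      rw [hdual Y Z U, A.D_add_right, hdual X (cd Y Z) U, hdual X Z (cds Y U)]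
    have h10 : A.D Y (A.D X (g Z U))
        = g (cd Y (cd X Z)) U + g (cd X Z) (cds Y U)
          + (g (cd Y Z) (cds X U) + g Z (cds Y (cds X U))) := by
      rw [hdual X Z U, A.D_add_right, hdual Y (cd X Z) U, hdual Y Z (cds X U)]
    rw [h9, h10, h7] at h8
    simp only [SM.curv, gsub_l, gsub_r]
    linear_combination -h8
  have hcurv : ∀ X Y Z U : V,
      g (SM.curv A cd X Y Z) U = -g (SM.curv A cds X Y U) Z := by
    intro X Y Z U
    have h := hcurv0 X Y Z U
    rw [hg.symm Z] at h
    linear_combination h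
  -- ### the scalar curvatures of dual connections agree
  set ι := Module.Free.ChooseBasisIndex C V with hι
  set b : Module.Basis ι C V := Module.Free.chooseBasis C V with hb
  have gsum_l : ∀ (s : Finset ι) (f : ι → V) (Y : V),
      g (∑ i ∈ s, f i) Y = ∑ i ∈ s, g (f i) Y := by
    intro s f Y
    induction s using Finset.cons_induction with
    | empty => simpa using gzero_l Y
    | cons a t ha ih => rw [Finset.sum_cons, Finset.sum_cons, hg.add_left, ih]
  have gL1 : ∀ (v Y : V), g v Y = ∑ i, b.repr v i * g (b i) Y := by
    intro v Y
    conv_lhs => rw [← b.sum_repr v]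
    rw [gsum_l]
    exact Finset.sum_congr rfl fun i _ => hg.smul_left _ _ _
  have gL1r : ∀ (Y v : V), g Y v = ∑ i, b.repr v i * g Y (b i) := by
    intro Y v
    rw [hg.symm, gL1]
    exact Finset.sum_congr rfl fun i _ => by rw [hg.symm]
  set G : Matrix ι ι C := Matrix.of (fun i j => g (b i) (b j)) with hG
  have hGsym : ∀ i j, G i j = G j i := fun i j => hg.symm _ _
  have hGinj : ∀ v, G.mulVec v = 0 → v = 0 := by
    intro v hv
    have hw : b.equivFun.symm v = 0 := by
      apply hg.nondeg
      intro Y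
      have hbj : ∀ j, g (b.equivFun.symm v) (b j) = 0 := by
        intro j
        rw [b.equivFun_symm_apply, gsum_l]
        have h := congrFun hv j
        simp only [Matrix.mulVec, dotProduct, Pi.zero_apply] at h
        rw [← h]
        refine Finset.sum_congr rfl fun i _ => ?_
        rw [hg.smul_left]
        simp only [hG, Matrix.of_apply]
        rw [hg.symm (b j) (b i)]
        ring
      rw [gL1r (b.equivFun.symm v) Y]
      refine Finset.sum_eq_zero fun i _ => ?_
      rw [hg.symm, hg.symm (b i), hbj i, mul_zero]
    have : b.equivFun.symm v = b.equivFun.symm 0 := by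
      rw [hw, map_zero]
    exact b.equivFun.symm.injective this
  set dg : C := G.det with hdg
  set aG : Matrix ι ι C := G.adjugate with haG
  have hGT : Gᵀ = G := by
    ext i j
    exact hGsym j i
  have haGsymM : aGᵀ = aG := by
    rw [haG, Matrix.adjugate_transpose, hGT]
  have haGsym : ∀ i j, aG i j = aG j i := by
    intro i j
    calc aG i j = aGᵀ j i := rfl
      _ = aG j i := by rw [haGsymM]
  have hadjmul : aG * G = dg • 1 := Matrix.adjugate_mul G
  have hmuladj : G * aG = dg • 1 := Matrix.mul_adjugate G
  -- trace identities for Ricci operators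
  have hPG : ∀ (f : V →ₗ[C] V) (Rf : V → V → C), (∀ X Y, g (f X) Y = Rf X Y) →
      (LinearMap.toMatrix b b f)ᵀ * G = Matrix.of (fun i j => Rf (b i) (b j)) := by
    intro f Rf hf
    ext i j
    rw [Matrix.mul_apply, Matrix.of_apply, ← hf (b i) (b j), gL1 (f (b i)) (b j)]
    refine Finset.sum_congr rfl fun k _ => ?_
    rw [Matrix.transpose_apply, LinearMap.toMatrix_apply]
    rfl
  have htrace : ∀ (P : Matrix ι ι C),
      Matrix.trace (Pᵀ * G * aG) = dg * Matrix.trace P := by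
    intro P
    rw [Matrix.mul_assoc, hmuladj, Matrix.mul_smul, mul_one,
      Matrix.trace_smul, Matrix.trace_transpose, smul_eq_mul]
  have htr1 : dg * σ' = Matrix.trace (Matrix.of (fun i j => Ric (b i) (b j)) * aG) := by
    rw [hσ, LinearMap.trace_eq_matrix_trace C b, ← htrace (LinearMap.toMatrix b b RicS),
      hPG RicS Ric hRicS]
  have htr2 : dg * σ's = Matrix.trace (Matrix.of (fun i j => Rics (b i) (b j)) * aG) := by
    rw [hσs, LinearMap.trace_eq_matrix_trace C b, ← htrace (LinearMap.toMatrix b b RicSs),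
      hPG RicSs Rics hRicSs]
  -- curvature coefficient matrices
  set K : ι → ι → Matrix ι ι C := fun j k => LinearMap.toMatrix b b (T (b j) (b k)) with hK
  set Ks : ι → ι → Matrix ι ι C := fun j k => LinearMap.toMatrix b b (Ts (b j) (b k)) with hKs
  have hKapp : ∀ j k p l, K j k p l = b.repr (SM.curv A cd (b l) (b j) (b k)) p := by
    intro j k p l
    simp only [hK]
    rw [LinearMap.toMatrix_apply, hT]
  have hKsapp : ∀ j k p l, Ks j k p l = b.repr (SM.curv A cds (b l) (b j) (b k)) p := by
    intro j k p l
    simp only [hKs]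
    rw [LinearMap.toMatrix_apply, hTs]
  have F1 : ∀ j k l m, (G * K j k) m l = -((G * Ks j m) k l) := by
    intro j k l m
    have e1 : (G * K j k) m l = g (b m) (SM.curv A cd (b l) (b j) (b k)) := by
      rw [Matrix.mul_apply, gL1r (b m) (SM.curv A cd (b l) (b j) (b k))]
      refine Finset.sum_congr rfl fun p _ => ?_
      rw [hKapp]
      simp only [hG, Matrix.of_apply]
      ring
    have e2 : (G * Ks j m) k l = g (b k) (SM.curv A cds (b l) (b j) (b m)) := by
      rw [Matrix.mul_apply, gL1r (b k) (SM.curv A cds (b l) (b j) (b m))]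
      refine Finset.sum_congr rfl fun p _ => ?_
      rw [hKsapp]
      simp only [hG, Matrix.of_apply]
      ring
    rw [e1, e2, hg.symm (b m), hcurv (b l) (b j) (b k) (b m),
      hg.symm (SM.curv A cds (b l) (b j) (b m)) (b k)]
  -- antisymmetry of the dual curvature in its first two arguments
  have hbr : ∀ X Y : V, A.bracket X Y = -A.bracket Y X := by
    intro X Y
    rw [← hstat.torsion_free, ← hstat.torsion_free]
    abel
  have cdsneg : ∀ W Z : V, cds (-W) Z = -cds W Z := by
    intro W Z
    have h := hconn.smul_left (-1 : C) W Z
    rwa [neg_one_smul, neg_one_smul] at h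
  have curv_anti : ∀ X Y Z : V, SM.curv A cds X Y Z = -SM.curv A cds Y X Z := by
    intro X Y Z
    simp only [SM.curv]
    rw [hbr X Y, cdsneg]
    abel
  have F2 : ∀ l m, (∑ j, (Ks j m) j l) = -Rics (b l) (b m) := by
    intro l m
    have h : ∀ j : ι, (Ks j m) j l = -((Ks l m) j j) := by
      intro j
      rw [hKsapp, hKsapp, curv_anti (b l) (b j) (b m), map_neg]
      rfl
    rw [Finset.sum_congr rfl fun j _ => h j, Finset.sum_neg_distrib]
    congr 1
    rw [hRics, LinearMap.trace_eq_matrix_trace C b, Matrix.trace]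
    rfl
  -- the contraction identities
  have I1 : ∀ (Xm : Matrix ι ι C) (l : ι),
      dg * Xm l l = ∑ m, aG l m * (G * Xm) m l := by
    intro Xm l
    have h : (∑ m, aG l m * (G * Xm) m l) = (aG * (G * Xm)) l l := (Matrix.mul_apply).symm
    rw [h, ← Matrix.mul_assoc, hadjmul, Matrix.smul_mul, one_mul,
      Matrix.smul_apply, smul_eq_mul]
  have I2 : ∀ (Z : Matrix ι ι C) (j l : ι),
      (∑ k, aG k j * (G * Z) k l) = dg * Z j l := by
    intro Z j l
    have h1 : (∑ k, aG k j * (G * Z) k l) = ∑ k, aG j k * (G * Z) k l :=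
      Finset.sum_congr rfl fun k _ => by rw [haGsym]
    have h2 : (∑ k, aG j k * (G * Z) k l) = (aG * (G * Z)) j l := (Matrix.mul_apply).symm
    rw [h1, h2, ← Matrix.mul_assoc, hadjmul, Matrix.smul_mul, one_mul,
      Matrix.smul_apply, smul_eq_mul]
  have htrexp : ∀ (Rm : Matrix ι ι C),
      Matrix.trace (Rm * aG) = ∑ j, ∑ k, Rm j k * aG k j := by
    intro Rm
    rw [Matrix.trace]
    refine Finset.sum_congr rfl fun j _ => ?_
    rw [Matrix.diag_apply, Matrix.mul_apply]
  have hRcK : ∀ j k, Ric (b j) (b k) = ∑ l, (K j k) l l := by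
    intro j k
    rw [hRic, LinearMap.trace_eq_matrix_trace C b, Matrix.trace]
    rfl
  -- the main computation
  have key : dg * (dg * σ') = dg * (dg * σ's) := by
    calc dg * (dg * σ')
        = dg * Matrix.trace (Matrix.of (fun i j => Ric (b i) (b j)) * aG) := by rw [htr1]
      _ = ∑ j, ∑ k, aG k j * (dg * Ric (b j) (b k)) := by
          rw [htrexp, Finset.mul_sum]
          refine Finset.sum_congr rfl fun j _ => ?_
          rw [Finset.mul_sum]
          refine Finset.sum_congr rfl fun k _ => ?_
          simp only [Matrix.of_apply]
          ring
      _ = ∑ j, ∑ k, ∑ l, ∑ m, aG k j * (aG l m * (G * K j k) m l) := by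
          refine Finset.sum_congr rfl fun j _ => Finset.sum_congr rfl fun k _ => ?_
          rw [hRcK, Finset.mul_sum, Finset.mul_sum]
          refine Finset.sum_congr rfl fun l _ => ?_
          rw [I1 (K j k) l, Finset.mul_sum]
      _ = ∑ j, ∑ k, ∑ l, ∑ m, -(aG k j * (aG l m * (G * Ks j m) k l)) := by
          refine Finset.sum_congr rfl fun j _ => Finset.sum_congr rfl fun k _ =>
            Finset.sum_congr rfl fun l _ => Finset.sum_congr rfl fun m _ => ?_
          rw [F1]
          ring
      _ = ∑ j, ∑ m, ∑ l, ∑ k, -(aG k j * (aG l m * (G * Ks j m) k l)) := by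
          refine Finset.sum_congr rfl fun j _ => ?_
          calc (∑ k, ∑ l, ∑ m, -(aG k j * (aG l m * (G * Ks j m) k l)))
              = ∑ l, ∑ k, ∑ m, -(aG k j * (aG l m * (G * Ks j m) k l)) := Finset.sum_comm
            _ = ∑ l, ∑ m, ∑ k, -(aG k j * (aG l m * (G * Ks j m) k l)) :=
                Finset.sum_congr rfl fun l _ => Finset.sum_comm
            _ = ∑ m, ∑ l, ∑ k, -(aG k j * (aG l m * (G * Ks j m) k l)) := Finset.sum_comm
      _ = ∑ j, ∑ m, ∑ l, -(aG l m * (dg * (Ks j m) j l)) := by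
          refine Finset.sum_congr rfl fun j _ => Finset.sum_congr rfl fun m _ =>
            Finset.sum_congr rfl fun l _ => ?_
          rw [← I2 (Ks j m) j l, Finset.mul_sum, Finset.sum_neg_distrib]
          refine congrArg Neg.neg (Finset.sum_congr rfl fun k _ => ?_)
          ring
      _ = ∑ m, ∑ l, -(aG l m * (dg * (∑ j, (Ks j m) j l))) := by
          calc (∑ j, ∑ m, ∑ l, -(aG l m * (dg * (Ks j m) j l)))
              = ∑ m, ∑ j, ∑ l, -(aG l m * (dg * (Ks j m) j l)) := Finset.sum_comm
            _ = ∑ m, ∑ l, ∑ j, -(aG l m * (dg * (Ks j m) j l)) :=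
                Finset.sum_congr rfl fun m _ => Finset.sum_comm
            _ = ∑ m, ∑ l, -(aG l m * (dg * (∑ j, (Ks j m) j l))) := by
                refine Finset.sum_congr rfl fun m _ => Finset.sum_congr rfl fun l _ => ?_
                rw [Finset.mul_sum, Finset.mul_sum, Finset.sum_neg_distrib]
      _ = ∑ m, ∑ l, dg * (Rics (b l) (b m) * aG m l) := by
          refine Finset.sum_congr rfl fun m _ => Finset.sum_congr rfl fun l _ => ?_
          rw [F2 l m, haGsym l m]
          ring
      _ = dg * Matrix.trace (Matrix.of (fun i j => Rics (b i) (b j)) * aG) := by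
          refine Eq.symm ?_
          calc dg * Matrix.trace (Matrix.of (fun i j => Rics (b i) (b j)) * aG)
              = ∑ j, ∑ k, dg * (Rics (b j) (b k) * aG k j) := by
                rw [htrexp, Finset.mul_sum]
                refine Finset.sum_congr rfl fun j _ => ?_
                rw [Finset.mul_sum]
                refine Finset.sum_congr rfl fun k _ => ?_
                simp only [Matrix.of_apply]
            _ = ∑ m, ∑ l, dg * (Rics (b l) (b m) * aG m l) := Finset.sum_comm
      _ = dg * (dg * σ's) := by rw [← htr2]
  have h1 : (dg * σ' - dg * σ's) * dg = 0 := by linear_combination key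
  have h2 : dg * σ' - dg * σ's = 0 := mccoy_aux G hGinj _ h1
  have h3 : (σ' - σ's) * dg = 0 := by linear_combination h2
  have h4 : σ' - σ's = 0 := mccoy_aux G hGinj _ h3
  have hss : σ's = σ' := by linear_combination -h4
  -- ### final assembly
  intro X Y Z U
  simp only [SM.cpW, hg.add_left, gsub_l, hg.smul_left, hRicS, hRicSs]
  rw [hcurv X Y Z U, hss]
  ring
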